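/- arXiv:1009.5186 — 9 statements merged into one kernel-verified Lean document; each statement's English description precedes it below -/
import Mathlib

section
/- Every element of the derived ideal L' = [L,L] of the Lie algebra L generated by two generic traceless 2×2 matrices has the form (xv − yt)·φ(f) + (xu − yv)·φ(g) + [x,y]·φ(h) for some polynomials f, g, h ∈ K[T,U,V]; conversely, every matrix of this form belongs to L'. In other words, L' coincides with the set { (xv − yt)·φ(f) + (xu − yv)·φ(g) + [x,y]·φ(h) : f, g, h ∈ K[T,U,V] }. -/
open Matrix MvPolynomial

attribute [local instance 100] LieRing.ofAssociativeRing

noncomputable section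

variable (K : Type*) [Field K] [CharZero K]

/-- The first generic traceless 2×2 matrix `x = !![x₁₁, x₁₂; x₂₁, -x₁₁]` over
`R = K[x₁₁,x₁₂,x₂₁,y₁₁,y₁₂,y₂₁]`, realized as `MvPolynomial (Fin 6) K` with
`x₁₁ = X 0, x₁₂ = X 1, x₂₁ = X 2, y₁₁ = X 3, y₁₂ = X 4, y₂₁ = X 5`. -/
def x : Matrix (Fin 2) (Fin 2) (MvPolynomial (Fin 6) K) := !![X 0, X 1; X 2, -(X 0)]

/-- The second generic traceless 2×2 matrix `y = !![y₁₁, y₁₂; y₂₁, -y₁₁]`. -/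
def y : Matrix (Fin 2) (Fin 2) (MvPolynomial (Fin 6) K) := !![X 3, X 4; X 5, -(X 3)]

/-- `t = tr(x²)`. -/
def t : MvPolynomial (Fin 6) K := (x K * x K).trace

/-- `u = tr(y²)`. -/
def u : MvPolynomial (Fin 6) K := (y K * y K).trace

/-- `v = tr(xy)`. -/
def v : MvPolynomial (Fin 6) K := (x K * y K).trace

/-- `φ : K[T,U,V] → R`, the `K`-algebra homomorphism sending `T ↦ t`, `U ↦ u`, `V ↦ v`. -/
def φ : MvPolynomial (Fin 3) K →ₐ[K] MvPolynomial (Fin 6) K := aeval ![t K, u K, v K]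

/-- `L`, the Lie `K`-subalgebra of `M₂(R)` generated by the generic matrices `x` and `y`. -/
def L : LieSubalgebra K (Matrix (Fin 2) (Fin 2) (MvPolynomial (Fin 6) K)) :=
  LieSubalgebra.lieSpan K _ {x K, y K}


/-! ### Auxiliary definitions and lemmas -/

set_option maxHeartbeats 1000000
set_option linter.unusedSectionVars false

/-- `A = v·x − t·y`. -/
def A : Matrix (Fin 2) (Fin 2) (MvPolynomial (Fin 6) K) := v K • x K - t K • y K

/-- `B = u·x − v·y`. -/
def B : Matrix (Fin 2) (Fin 2) (MvPolynomial (Fin 6) K) := u K • x K - v K • y K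

/-- `Cm = [x,y]`. -/
def Cm : Matrix (Fin 2) (Fin 2) (MvPolynomial (Fin 6) K) := ⁅x K, y K⁆

/-- Bilinearity lemmas restated for the concrete matrix instances. -/
lemma lie_smul' (s : MvPolynomial (Fin 6) K)
    (a b : Matrix (Fin 2) (Fin 2) (MvPolynomial (Fin 6) K)) :
    ⁅a, s • b⁆ = s • ⁅a, b⁆ := lie_smul s a b

lemma smul_lie' (s : MvPolynomial (Fin 6) K)
    (a b : Matrix (Fin 2) (Fin 2) (MvPolynomial (Fin 6) K)) :
    ⁅s • a, b⁆ = s • ⁅a, b⁆ := smul_lie s a b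

lemma lie_ksmul (k : K) (a b : Matrix (Fin 2) (Fin 2) (MvPolynomial (Fin 6) K)) :
    ⁅a, k • b⁆ = k • ⁅a, b⁆ := lie_smul k a b

lemma ksmul_lie (k : K) (a b : Matrix (Fin 2) (Fin 2) (MvPolynomial (Fin 6) K)) :
    ⁅k • a, b⁆ = k • ⁅a, b⁆ := smul_lie k a b

lemma smul_assoc' (k : K) (s : MvPolynomial (Fin 6) K)
    (m : Matrix (Fin 2) (Fin 2) (MvPolynomial (Fin 6) K)) :
    (k • s) • m = k • (s • m) := smul_assoc k s m

lemma smul_comm' (k : MvPolynomial (Fin 6) K) (s : MvPolynomial (Fin 6) K)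
    (m : Matrix (Fin 2) (Fin 2) (MvPolynomial (Fin 6) K)) :
    k • (s • m) = s • (k • m) := smul_comm k s m

lemma l_xC : ⁅x K, Cm K⁆ = (-2 : MvPolynomial (Fin 6) K) • A K := by
  refine Matrix.ext fun i j => ?_
  fin_cases i <;> fin_cases j <;>
    simp only [A, B, Cm, x, y, t, u, v, Ring.lie_def, Matrix.sub_apply, Matrix.smul_apply,
      Matrix.add_apply, Matrix.mul_apply, Fin.sum_univ_two, Matrix.trace_fin_two,
      Fin.mk_zero, Fin.mk_one, Fin.isValue,
      Matrix.cons_val', Matrix.cons_val_zero, Matrix.cons_val_one, Matrix.head_cons,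
      Matrix.head_fin_const, Matrix.empty_val', Matrix.cons_val_fin_one, Matrix.of_apply,
      smul_eq_mul, Matrix.neg_apply] <;> ring

lemma l_yC : ⁅y K, Cm K⁆ = (-2 : MvPolynomial (Fin 6) K) • B K := by
  refine Matrix.ext fun i j => ?_
  fin_cases i <;> fin_cases j <;>
    simp only [A, B, Cm, x, y, t, u, v, Ring.lie_def, Matrix.sub_apply, Matrix.smul_apply,
      Matrix.add_apply, Matrix.mul_apply, Fin.sum_univ_two, Matrix.trace_fin_two,
      Fin.mk_zero, Fin.mk_one, Fin.isValue,
      Matrix.cons_val', Matrix.cons_val_zero, Matrix.cons_val_one, Matrix.head_cons,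
      Matrix.head_fin_const, Matrix.empty_val', Matrix.cons_val_fin_one, Matrix.of_apply,
      smul_eq_mul, Matrix.neg_apply] <;> ring

lemma l_xA : ⁅x K, A K⁆ = -(t K • Cm K) := by
  refine Matrix.ext fun i j => ?_
  fin_cases i <;> fin_cases j <;>
    simp only [A, B, Cm, x, y, t, u, v, Ring.lie_def, Matrix.sub_apply, Matrix.smul_apply,
      Matrix.add_apply, Matrix.mul_apply, Fin.sum_univ_two, Matrix.trace_fin_two,
      Fin.mk_zero, Fin.mk_one, Fin.isValue,
      Matrix.cons_val', Matrix.cons_val_zero, Matrix.cons_val_one, Matrix.head_cons,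
      Matrix.head_fin_const, Matrix.empty_val', Matrix.cons_val_fin_one, Matrix.of_apply,
      smul_eq_mul, Matrix.neg_apply] <;> ring

lemma l_xB : ⁅x K, B K⁆ = -(v K • Cm K) := by
  refine Matrix.ext fun i j => ?_
  fin_cases i <;> fin_cases j <;>
    simp only [A, B, Cm, x, y, t, u, v, Ring.lie_def, Matrix.sub_apply, Matrix.smul_apply,
      Matrix.add_apply, Matrix.mul_apply, Fin.sum_univ_two, Matrix.trace_fin_two,
      Fin.mk_zero, Fin.mk_one, Fin.isValue,
      Matrix.cons_val', Matrix.cons_val_zero, Matrix.cons_val_one, Matrix.head_cons,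
      Matrix.head_fin_const, Matrix.empty_val', Matrix.cons_val_fin_one, Matrix.of_apply,
      smul_eq_mul, Matrix.neg_apply] <;> ring

lemma l_yA : ⁅y K, A K⁆ = -(v K • Cm K) := by
  refine Matrix.ext fun i j => ?_
  fin_cases i <;> fin_cases j <;>
    simp only [A, B, Cm, x, y, t, u, v, Ring.lie_def, Matrix.sub_apply, Matrix.smul_apply,
      Matrix.add_apply, Matrix.mul_apply, Fin.sum_univ_two, Matrix.trace_fin_two,
      Fin.mk_zero, Fin.mk_one, Fin.isValue,
      Matrix.cons_val', Matrix.cons_val_zero, Matrix.cons_val_one, Matrix.head_cons,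
      Matrix.head_fin_const, Matrix.empty_val', Matrix.cons_val_fin_one, Matrix.of_apply,
      smul_eq_mul, Matrix.neg_apply] <;> ring

lemma l_yB : ⁅y K, B K⁆ = -(u K • Cm K) := by
  refine Matrix.ext fun i j => ?_
  fin_cases i <;> fin_cases j <;>
    simp only [A, B, Cm, x, y, t, u, v, Ring.lie_def, Matrix.sub_apply, Matrix.smul_apply,
      Matrix.add_apply, Matrix.mul_apply, Fin.sum_univ_two, Matrix.trace_fin_two,
      Fin.mk_zero, Fin.mk_one, Fin.isValue,
      Matrix.cons_val', Matrix.cons_val_zero, Matrix.cons_val_one, Matrix.head_cons,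
      Matrix.head_fin_const, Matrix.empty_val', Matrix.cons_val_fin_one, Matrix.of_apply,
      smul_eq_mul, Matrix.neg_apply] <;> ring

lemma l_AB : ⁅A K, B K⁆ = (t K * u K - v K * v K) • Cm K := by
  have h : ⁅A K, B K⁆ = v K • ⁅x K, B K⁆ - t K • ⁅y K, B K⁆ := by
    rw [A, sub_lie, smul_lie' K, smul_lie' K]
  rw [h, l_xB, l_yB]
  module

lemma l_AC : ⁅A K, Cm K⁆ = (-2 * v K) • A K + (2 * t K) • B K := by
  have h : ⁅A K, Cm K⁆ = v K • ⁅x K, Cm K⁆ - t K • ⁅y K, Cm K⁆ := by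
    rw [A, sub_lie, smul_lie' K, smul_lie' K]
  rw [h, l_xC, l_yC]
  module

lemma l_BC : ⁅B K, Cm K⁆ = (-2 * u K) • A K + (2 * v K) • B K := by
  have h : ⁅B K, Cm K⁆ = u K • ⁅x K, Cm K⁆ - v K • ⁅y K, Cm K⁆ := by
    rw [B, sub_lie, smul_lie' K, smul_lie' K]
  rw [h, l_xC, l_yC]
  module

lemma phi0 : φ K (X 0) = t K := by simp [φ]
lemma phi1 : φ K (X 1) = u K := by simp [φ]
lemma phi2 : φ K (X 2) = v K := by simp [φ]

/-- The submodule `M = φ(K[T,U,V])·A + φ(K[T,U,V])·B + φ(K[T,U,V])·C`. -/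
def Msub : Submodule K (Matrix (Fin 2) (Fin 2) (MvPolynomial (Fin 6) K)) where
  carrier := {m | ∃ f g h : MvPolynomial (Fin 3) K,
    m = φ K f • A K + φ K g • B K + φ K h • Cm K}
  add_mem' := by
    rintro a b ⟨f1, g1, h1, rfl⟩ ⟨f2, g2, h2, rfl⟩
    exact ⟨f1 + f2, g1 + g2, h1 + h2, by simp only [map_add, add_smul]; abel⟩
  zero_mem' := ⟨0, 0, 0, by simp⟩
  smul_mem' := by
    rintro k a ⟨f, g, h, rfl⟩
    refine ⟨k • f, k • g, k • h, ?_⟩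
    rw [smul_add, smul_add, _root_.map_smul, _root_.map_smul, _root_.map_smul,
      smul_assoc' K, smul_assoc' K, smul_assoc' K]

lemma Cm_mem_Msub : Cm K ∈ Msub K := ⟨0, 0, 1, by simp⟩

lemma lie_x_M {m : Matrix (Fin 2) (Fin 2) (MvPolynomial (Fin 6) K)} (hm : m ∈ Msub K) :
    ⁅x K, m⁆ ∈ Msub K := by
  obtain ⟨f, g, h, rfl⟩ := hm
  refine ⟨-2 * h, 0, -(f * X 0 + g * X 2), ?_⟩
  simp only [lie_add, lie_smul' K, l_xA, l_xB, l_xC, _root_.map_mul, map_add, map_neg,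
    map_ofNat, map_zero, phi0, phi2]
  module

lemma lie_y_M {m : Matrix (Fin 2) (Fin 2) (MvPolynomial (Fin 6) K)} (hm : m ∈ Msub K) :
    ⁅y K, m⁆ ∈ Msub K := by
  obtain ⟨f, g, h, rfl⟩ := hm
  refine ⟨0, -2 * h, -(f * X 2 + g * X 1), ?_⟩
  simp only [lie_add, lie_smul' K, l_yA, l_yB, l_yC, _root_.map_mul, map_add, map_neg,
    map_ofNat, map_zero, phi1, phi2]
  module

lemma lie_M_M {m n : Matrix (Fin 2) (Fin 2) (MvPolynomial (Fin 6) K)}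
    (hm : m ∈ Msub K) (hn : n ∈ Msub K) : ⁅m, n⁆ ∈ Msub K := by
  obtain ⟨f1, g1, h1, rfl⟩ := hm
  obtain ⟨f2, g2, h2, rfl⟩ := hn
  refine ⟨-2 * X 2 * (f1 * h2 - h1 * f2) - 2 * X 1 * (g1 * h2 - h1 * g2),
    2 * X 0 * (f1 * h2 - h1 * f2) + 2 * X 2 * (g1 * h2 - h1 * g2),
    (f1 * g2 - g1 * f2) * (X 0 * X 1 - X 2 * X 2), ?_⟩
  have hBA : ⁅B K, A K⁆ = -((t K * u K - v K * v K) • Cm K) := by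
    rw [← lie_skew, l_AB]
  have hCA : ⁅Cm K, A K⁆ = -((-2 * v K) • A K + (2 * t K) • B K) := by
    rw [← lie_skew, l_AC]
  have hCB : ⁅Cm K, B K⁆ = -((-2 * u K) • A K + (2 * v K) • B K) := by
    rw [← lie_skew, l_BC]
  simp only [add_lie, lie_add, smul_lie' K, lie_smul' K, lie_self, smul_zero,
    l_AB, l_AC, l_BC, hBA, hCA, hCB, _root_.map_mul, map_add, map_sub, map_neg,
    map_ofNat, phi0, phi1, phi2]
  module

/-- The submodule `N = K·x + K·y + M`. -/
def Nsub : Submodule K (Matrix (Fin 2) (Fin 2) (MvPolynomial (Fin 6) K)) :=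
  Submodule.span K
    ({x K, y K} ∪ (Msub K : Set (Matrix (Fin 2) (Fin 2) (MvPolynomial (Fin 6) K))))

lemma Msub_le_Nsub : Msub K ≤ Nsub K := fun m hm => Submodule.subset_span (Or.inr hm)

lemma lie_gen_N {p q : Matrix (Fin 2) (Fin 2) (MvPolynomial (Fin 6) K)}
    (hp : p ∈ ({x K, y K} : Set (Matrix (Fin 2) (Fin 2) (MvPolynomial (Fin 6) K))) ∪
      (Msub K : Set (Matrix (Fin 2) (Fin 2) (MvPolynomial (Fin 6) K))))
    (hq : q ∈ Nsub K) : ⁅p, q⁆ ∈ Msub K := by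
  induction hq using Submodule.span_induction with
  | mem q hq =>
    rcases hp with hp | hp
    · rcases hq with hq | hq
      · rcases hp with rfl | rfl <;> rcases hq with rfl | rfl
        · rw [lie_self]; exact (Msub K).zero_mem
        · exact Cm_mem_Msub K
        · rw [← lie_skew]; exact (Msub K).neg_mem (Cm_mem_Msub K)
        · rw [lie_self]; exact (Msub K).zero_mem
      · rcases hp with rfl | rfl
        · exact lie_x_M K hq
        · exact lie_y_M K hq
    · rcases hq with hq | hq
      · rw [← lie_skew]
        rcases hq with rfl | rfl
        · exact (Msub K).neg_mem (lie_x_M K hp)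
        · exact (Msub K).neg_mem (lie_y_M K hp)
      · exact lie_M_M K hp hq
  | zero => rw [lie_zero]; exact (Msub K).zero_mem
  | add a b _ _ ha hb => rw [lie_add]; exact (Msub K).add_mem ha hb
  | smul k a _ ha => rw [lie_ksmul K]; exact (Msub K).smul_mem k ha

lemma lie_N_N {p q : Matrix (Fin 2) (Fin 2) (MvPolynomial (Fin 6) K)}
    (hp : p ∈ Nsub K) (hq : q ∈ Nsub K) : ⁅p, q⁆ ∈ Msub K := by
  induction hp using Submodule.span_induction with
  | mem p hp => exact lie_gen_N K hp hq
  | zero => rw [zero_lie]; exact (Msub K).zero_mem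
  | add a b _ _ ha hb => rw [add_lie]; exact (Msub K).add_mem ha hb
  | smul k a _ ha => rw [ksmul_lie K]; exact (Msub K).smul_mem k ha

/-- `N` as a Lie subalgebra. -/
def NLie : LieSubalgebra K (Matrix (Fin 2) (Fin 2) (MvPolynomial (Fin 6) K)) :=
  { Nsub K with
    lie_mem' := fun hp hq => Msub_le_Nsub K (lie_N_N K hp hq) }

lemma L_le_NLie : L K ≤ NLie K := by
  rw [L]
  refine LieSubalgebra.lieSpan_le.mpr ?_
  rintro w (rfl | rfl)
  · exact Submodule.subset_span (Or.inl (Set.mem_insert _ _))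
  · exact Submodule.subset_span (Or.inl (Set.mem_insert_iff.mpr (Or.inr rfl)))

lemma coe_mem_Nsub (z : L K) :
    (z : Matrix (Fin 2) (Fin 2) (MvPolynomial (Fin 6) K)) ∈ Nsub K :=
  L_le_NLie K z.2

/-- The preimage of `M` in `L`, as a Lie submodule of `L`. -/
def P : LieSubmodule K (L K) (L K) where
  carrier := {z : L K | (z : Matrix (Fin 2) (Fin 2) (MvPolynomial (Fin 6) K)) ∈ Msub K}
  add_mem' := by
    intro a b ha hb
    exact (Msub K).add_mem ha hb
  zero_mem' := by
    exact (Msub K).zero_mem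
  smul_mem' := by
    intro c a ha
    exact (Msub K).smul_mem c ha
  lie_mem := by
    intro w z hz
    show ((⁅w, z⁆ : L K) : Matrix (Fin 2) (Fin 2) (MvPolynomial (Fin 6) K)) ∈ Msub K
    rw [LieSubalgebra.coe_bracket]
    exact lie_N_N K (coe_mem_Nsub K w) (Msub_le_Nsub K hz)

lemma derived_eq_top_top :
    LieAlgebra.derivedSeries K (L K) 1 = ⁅(⊤ : LieIdeal K (L K)), (⊤ : LieIdeal K (L K))⁆ := by
  simp [LieAlgebra.derivedSeries_def, LieAlgebra.derivedSeriesOfIdeal_succ,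
    LieAlgebra.derivedSeriesOfIdeal_zero]

lemma derived_le_P : LieAlgebra.derivedSeries K (L K) 1 ≤ P K := by
  rw [derived_eq_top_top, LieSubmodule.lieIdeal_oper_eq_span]
  refine LieSubmodule.lieSpan_le.mpr ?_
  rintro m ⟨a, b, rfl⟩
  show ((⁅((a : L K)), ((b : L K))⁆ : L K) :
    Matrix (Fin 2) (Fin 2) (MvPolynomial (Fin 6) K)) ∈ Msub K
  rw [LieSubalgebra.coe_bracket]
  exact lie_N_N K (coe_mem_Nsub K _) (coe_mem_Nsub K _)

/-! ### The backward direction -/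

lemma x_mem_L : x K ∈ L K := LieSubalgebra.subset_lieSpan (Set.mem_insert _ _)
lemma y_mem_L : y K ∈ L K := LieSubalgebra.subset_lieSpan (Set.mem_insert_iff.mpr (Or.inr rfl))

/-- Membership in the derived ideal, pushed to matrices. -/
def Dprop (m : Matrix (Fin 2) (Fin 2) (MvPolynomial (Fin 6) K)) : Prop :=
  ∃ z : L K, z ∈ LieAlgebra.derivedSeries K (L K) 1 ∧
    (z : Matrix (Fin 2) (Fin 2) (MvPolynomial (Fin 6) K)) = m

lemma dAdd {m n} (hm : Dprop K m) (hn : Dprop K n) : Dprop K (m + n) := by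
  obtain ⟨z, hz, rfl⟩ := hm
  obtain ⟨w, hw, rfl⟩ := hn
  exact ⟨z + w, (LieAlgebra.derivedSeries K (L K) 1).add_mem hz hw, rfl⟩

lemma dSmul (k : K) {m} (hm : Dprop K m) : Dprop K (k • m) := by
  obtain ⟨z, hz, rfl⟩ := hm
  exact ⟨k • z, (LieAlgebra.derivedSeries K (L K) 1).smul_mem k hz, rfl⟩

lemma dNeg {m} (hm : Dprop K m) : Dprop K (-m) := by
  have h := dSmul K (-1) hm
  rwa [neg_one_smul] at h

lemma dLieX {m} (hm : Dprop K m) : Dprop K ⁅x K, m⁆ := by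
  obtain ⟨z, hz, rfl⟩ := hm
  exact ⟨⁅(⟨x K, x_mem_L K⟩ : L K), z⁆,
    (LieAlgebra.derivedSeries K (L K) 1).lie_mem hz, LieSubalgebra.coe_bracket _ _ _⟩

lemma dLieY {m} (hm : Dprop K m) : Dprop K ⁅y K, m⁆ := by
  obtain ⟨z, hz, rfl⟩ := hm
  exact ⟨⁅(⟨y K, y_mem_L K⟩ : L K), z⁆,
    (LieAlgebra.derivedSeries K (L K) 1).lie_mem hz, LieSubalgebra.coe_bracket _ _ _⟩

lemma dCm : Dprop K (Cm K) := by
  refine ⟨⁅(⟨x K, x_mem_L K⟩ : L K), (⟨y K, y_mem_L K⟩ : L K)⁆, ?_,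
    LieSubalgebra.coe_bracket _ _ _⟩
  rw [derived_eq_top_top]
  exact LieSubmodule.lie_mem_lie (LieSubmodule.mem_top _) (LieSubmodule.mem_top _)

lemma half_neg_two (m : Matrix (Fin 2) (Fin 2) (MvPolynomial (Fin 6) K)) :
    (-(1/2 : K)) • ((-2 : MvPolynomial (Fin 6) K) • m) = m := by
  rw [← smul_assoc' K]
  have h : (-(1/2 : K)) • (-2 : MvPolynomial (Fin 6) K) = 1 := by
    rw [Algebra.smul_def]
    rw [show ((-2 : MvPolynomial (Fin 6) K)) = algebraMap K (MvPolynomial (Fin 6) K) (-2) by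
      rw [map_neg, map_ofNat]]
    rw [← _root_.map_mul]
    norm_num
  rw [h, one_smul]

lemma idA (s : MvPolynomial (Fin 6) K) :
    s • A K = (-(1/2 : K)) • ⁅x K, s • Cm K⁆ := by
  rw [lie_smul' K, l_xC, smul_comm' K, half_neg_two]

lemma idB (s : MvPolynomial (Fin 6) K) :
    s • B K = (-(1/2 : K)) • ⁅y K, s • Cm K⁆ := by
  rw [lie_smul' K, l_yC, smul_comm' K, half_neg_two]

lemma eT (s : MvPolynomial (Fin 6) K) :
    (s * t K) • Cm K = -⁅x K, s • A K⁆ := by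
  rw [lie_smul' K, l_xA, smul_neg, neg_neg, smul_smul]

lemma eU (s : MvPolynomial (Fin 6) K) :
    (s * u K) • Cm K = -⁅y K, s • B K⁆ := by
  rw [lie_smul' K, l_yB, smul_neg, neg_neg, smul_smul]

lemma eV (s : MvPolynomial (Fin 6) K) :
    (s * v K) • Cm K = -⁅y K, s • A K⁆ := by
  rw [lie_smul' K, l_yA, smul_neg, neg_neg, smul_smul]

lemma dC (f : MvPolynomial (Fin 3) K) : Dprop K (φ K f • Cm K) := by
  induction f using MvPolynomial.induction_on with
  | C k =>
    rw [show φ K (C k) = algebraMap K (MvPolynomial (Fin 6) K) k from aeval_C _ _,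
      algebraMap_smul]
    exact dSmul K k (dCm K)
  | add p q hp hq =>
    rw [map_add, add_smul]
    exact dAdd K hp hq
  | mul_X p i hp =>
    rw [_root_.map_mul]
    have hA : Dprop K (φ K p • A K) := by rw [idA]; exact dSmul K _ (dLieX K hp)
    have hB : Dprop K (φ K p • B K) := by rw [idB]; exact dSmul K _ (dLieY K hp)
    fin_cases i
    · show Dprop K ((φ K p * φ K (X 0)) • Cm K)
      rw [phi0, eT]; exact dNeg K (dLieX K hA)
    · show Dprop K ((φ K p * φ K (X 1)) • Cm K)
      rw [phi1, eU]; exact dNeg K (dLieY K hB)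
    · show Dprop K ((φ K p * φ K (X 2)) • Cm K)
      rw [phi2, eV]; exact dNeg K (dLieY K hA)

lemma dA (f : MvPolynomial (Fin 3) K) : Dprop K (φ K f • A K) := by
  rw [idA]; exact dSmul K _ (dLieX K (dC K f))

lemma dB (f : MvPolynomial (Fin 3) K) : Dprop K (φ K f • B K) := by
  rw [idB]; exact dSmul K _ (dLieY K (dC K f))

/-- The derived ideal `L' = [L,L]` of `L` consists exactly of the matrices of the form
`(xv − yt)·φ(f) + (xu − yv)·φ(g) + [x,y]·φ(h)` with `f, g, h ∈ K[T,U,V]`. -/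
theorem stmt_0 (m : Matrix (Fin 2) (Fin 2) (MvPolynomial (Fin 6) K)) :
    (∃ z : L K, z ∈ LieAlgebra.derivedSeries K (L K) 1 ∧
        (z : Matrix (Fin 2) (Fin 2) (MvPolynomial (Fin 6) K)) = m) ↔
    ∃ f g h : MvPolynomial (Fin 3) K,
      m = φ K f • (v K • x K - t K • y K) + φ K g • (u K • x K - v K • y K)
          + φ K h • ⁅x K, y K⁆ := by
  constructor
  · rintro ⟨z, hz, rfl⟩
    have hM : (z : Matrix (Fin 2) (Fin 2) (MvPolynomial (Fin 6) K)) ∈ Msub K :=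
      derived_le_P K hz
    obtain ⟨f, g, h, heq⟩ := hM
    exact ⟨f, g, h, heq⟩
  · rintro ⟨f, g, h, rfl⟩
    exact dAdd K (dAdd K (dA K f) (dB K g)) (dC K h)
end
end

section
/- If polynomials f, g, h ∈ K[T,U,V] satisfy (xv − yt)·φ(f) + (xu − yv)·φ(g) + [x,y]·φ(h) = 0 in M₂(R), then f = g = h = 0. (Hence the derived ideal L' of L is a free module over the image of φ with free generators xv − yt, xu − yv and [x,y].) -/
open Matrix MvPolynomial

noncomputable section

variable (K : Type*) [Field K] [CharZero K]

set_option linter.unusedSectionVars false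

lemma t_eq' : t K = 2 * X 0 ^ 2 + 2 * X 1 * X 2 := by
  simp [t, x, Matrix.trace_fin_two, Matrix.mul_fin_two]; ring

lemma u_eq' : u K = 2 * X 3 ^ 2 + 2 * X 4 * X 5 := by
  simp [u, y, Matrix.trace_fin_two, Matrix.mul_fin_two]; ring

lemma v_eq' : v K = 2 * X 0 * X 3 + X 1 * X 5 + X 2 * X 4 := by
  simp [v, x, y, Matrix.trace_fin_two, Matrix.mul_fin_two]; ring

lemma cons6_two {α : Type*} (a0 a1 a2 a3 a4 a5 : α) :
    (![a0, a1, a2, a3, a4, a5] : Fin 6 → α) 2 = a2 := rfl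
lemma cons6_three {α : Type*} (a0 a1 a2 a3 a4 a5 : α) :
    (![a0, a1, a2, a3, a4, a5] : Fin 6 → α) 3 = a3 := rfl
lemma cons6_four {α : Type*} (a0 a1 a2 a3 a4 a5 : α) :
    (![a0, a1, a2, a3, a4, a5] : Fin 6 → α) 4 = a4 := rfl
lemma cons6_five {α : Type*} (a0 a1 a2 a3 a4 a5 : α) :
    (![a0, a1, a2, a3, a4, a5] : Fin 6 → α) 5 = a5 := rfl
lemma cons3_two {α : Type*} (a0 a1 a2 : α) :
    (![a0, a1, a2] : Fin 3 → α) 2 = a2 := rfl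

lemma aeval_eq_eval'' (p : Fin 3 → K) (q : MvPolynomial (Fin 3) K) :
    aeval p q = eval p q := by
  rw [aeval_def, Algebra.algebraMap_self]; rfl

lemma aux_inj' (f : MvPolynomial (Fin 3) K)
    (hf : aeval ![2 * X 0, 2 * X 1 ^ 2 + 2 * X 2, X 0 + X 2] f = (0 : MvPolynomial (Fin 3) K)) :
    f = 0 := by
  have eval_aeval : ∀ (p : Fin 3 → K) (vec : Fin 3 → MvPolynomial (Fin 3) K)
      (f : MvPolynomial (Fin 3) K),
      eval p (aeval vec f) = eval (fun i => eval p (vec i)) f := by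
    intro p vec f
    rw [← aeval_eq_eval'' K p, ← aeval_eq_eval'' K _ f]
    have : (aeval p : MvPolynomial (Fin 3) K →ₐ[K] K).comp (aeval vec)
        = aeval (fun i => eval p (vec i)) := by
      apply algHom_ext
      intro i
      simp [aeval_eq_eval'']
    calc aeval p (aeval vec f)
        = ((aeval p : MvPolynomial (Fin 3) K →ₐ[K] K).comp (aeval vec)) f := rfl
    _ = _ := by rw [this]
  have hf' : ∀ p : Fin 3 → K, eval ![2 * p 0, 2 * p 1 ^ 2 + 2 * p 2, p 0 + p 2] f = 0 := by
    intro p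
    have := congrArg (eval p) hf
    rw [eval_aeval] at this
    simp only [map_zero] at this
    have hvec : (fun i => eval p (![2 * X 0, 2 * X 1 ^ 2 + 2 * X 2, X 0 + X 2] i))
        = ![2 * p 0, 2 * p 1 ^ 2 + 2 * p 2, p 0 + p 2] := by
      funext i; fin_cases i <;> simp
    rwa [hvec] at this
  have key : ∀ s μ w : K, eval ![s, μ, w] f = 0 := by
    intro s μ w
    set q : Polynomial K := aeval ![Polynomial.C s, Polynomial.X, Polynomial.C w] f with hq
    have qeval : ∀ μ' : K, Polynomial.eval μ' q = eval ![s, μ', w] f := by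
      intro μ'
      have : (Polynomial.aeval μ' : Polynomial K →ₐ[K] K).comp
          (aeval ![Polynomial.C s, Polynomial.X, Polynomial.C w]) = aeval ![s, μ', w] := by
        apply algHom_ext
        intro i
        fin_cases i <;> simp
      have h2 : Polynomial.aeval μ' q = aeval ![s, μ', w] f := by
        rw [hq, ← this]; rfl
      rw [← aeval_eq_eval'', ← h2, Polynomial.aeval_def, Algebra.algebraMap_self]
      rfl
    have hcomp : q.comp (Polynomial.C 2 * Polynomial.X ^ 2
        + Polynomial.C (2 * (w - s / 2))) = 0 := by
      apply Polynomial.zero_of_eval_zero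
      intro β
      rw [Polynomial.eval_comp]
      simp only [Polynomial.eval_add, Polynomial.eval_mul, Polynomial.eval_pow,
        Polynomial.eval_C, Polynomial.eval_X]
      rw [qeval]
      have h3 := hf' ![s / 2, β, w - s / 2]
      have hvec : (![2 * (![s / 2, β, w - s / 2]) 0, 2 * (![s / 2, β, w - s / 2]) 1 ^ 2
          + 2 * (![s / 2, β, w - s / 2]) 2, (![s / 2, β, w - s / 2]) 0 + (![s / 2, β, w - s / 2]) 2])
          = ![s, 2 * β ^ 2 + 2 * (w - s / 2), w] := by
        funext i; fin_cases i <;> simp <;> ring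
      rw [hvec] at h3
      exact h3
    have hq0 : q = 0 := by
      rcases Polynomial.comp_eq_zero_iff.mp hcomp with h | ⟨_, h⟩
      · exact h
      · exfalso
        have := congrArg (fun p => Polynomial.coeff p 2) h
        simp at this
    rw [← qeval, hq0, Polynomial.eval_zero]
  apply MvPolynomial.funext (q := 0)
  intro p
  have hp : p = ![p 0, p 1, p 2] := by funext i; fin_cases i <;> rfl
  rw [hp, key]; simp

lemma comp_eq' : (aeval ![0, X 0, 1, X 1, X 2, 1] :
      MvPolynomial (Fin 6) K →ₐ[K] MvPolynomial (Fin 3) K).comp (φ K)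
    = aeval ![2 * X 0, 2 * X 1 ^ 2 + 2 * X 2, X 0 + X 2] := by
  apply algHom_ext
  intro i
  fin_cases i <;>
    simp [φ, t_eq', u_eq', v_eq', map_ofNat, cons6_two, cons6_three, cons6_four, cons6_five,
      cons3_two] <;>
    ring

lemma φ_inj' : Function.Injective (φ K) := by
  rw [injective_iff_map_eq_zero]
  intro p hp
  apply aux_inj'
  have h1 := congrArg (aeval ![0, X 0, 1, X 1, X 2, 1] :
      MvPolynomial (Fin 6) K →ₐ[K] MvPolynomial (Fin 3) K) hp
  rw [map_zero] at h1
  calc aeval ![2 * X 0, 2 * X 1 ^ 2 + 2 * X 2, X 0 + X 2] p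
      = ((aeval ![0, X 0, 1, X 1, X 2, 1] :
          MvPolynomial (Fin 6) K →ₐ[K] MvPolynomial (Fin 3) K).comp (φ K)) p := by
        rw [comp_eq']
  _ = 0 := h1

/-- If `(xv − yt)·φ(f) + (xu − yv)·φ(g) + [x,y]·φ(h) = 0` in `M₂(R)`, then `f = g = h = 0`;
hence `xv − yt`, `xu − yv`, `[x,y]` are free generators of `L'` over the image of `φ`. -/
theorem stmt_1 (f g h : MvPolynomial (Fin 3) K)
    (hfgh : φ K f • (v K • x K - t K • y K) + φ K g • (u K • x K - v K • y K)
        + φ K h • ⁅x K, y K⁆ = 0) :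
    f = 0 ∧ g = 0 ∧ h = 0 := by
  have E1 := congrFun (congrFun hfgh 0) 0
  have E2 := congrFun (congrFun hfgh 0) 1
  have E3 := congrFun (congrFun hfgh 1) 0
  simp only [Ring.lie_def, Matrix.add_apply, Matrix.sub_apply, Matrix.smul_apply,
    Matrix.mul_apply, Fin.sum_univ_two, smul_eq_mul, Matrix.zero_apply, x, y,
    Matrix.of_apply, Matrix.cons_val', Matrix.cons_val_fin_one, Matrix.empty_val',
    Matrix.cons_val_zero, Matrix.cons_val_one, Matrix.head_cons,
    Matrix.head_fin_const] at E1 E2 E3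
  set N : Matrix (Fin 3) (Fin 3) (MvPolynomial (Fin 6) K) :=
    !![v K * X 0 - t K * X 3, u K * X 0 - v K * X 3, X 1 * X 5 - X 2 * X 4;
       v K * X 1 - t K * X 4, u K * X 1 - v K * X 4, 2 * (X 0 * X 4 - X 1 * X 3);
       v K * X 2 - t K * X 5, u K * X 2 - v K * X 5, 2 * (X 2 * X 3 - X 0 * X 5)] with hN
  have hmv : N.mulVec ![φ K f, φ K g, φ K h] = 0 := by
    funext i
    fin_cases i <;>
      simp [hN, Matrix.mulVec, dotProduct, Fin.sum_univ_three, cons3_two]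
    · linear_combination E1
    · linear_combination E2
    · linear_combination E3
  have hz : N.det • ![φ K f, φ K g, φ K h] = 0 := by
    have h1 : (N.adjugate * N).mulVec ![φ K f, φ K g, φ K h] = 0 := by
      rw [← Matrix.mulVec_mulVec, hmv, Matrix.mulVec_zero]
    rwa [Matrix.adjugate_mul, Matrix.smul_mulVec, Matrix.one_mulVec] at h1
  have hdet : N.det ≠ 0 := by
    intro h0
    have hev := congrArg (eval (![1, 2, 3, 5, 7, 11] : Fin 6 → K)) h0
    rw [Matrix.det_fin_three] at hev
    simp only [hN, t_eq', u_eq', v_eq', Matrix.of_apply, Matrix.cons_val_zero,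
      Matrix.cons_val_one, Matrix.head_cons, cons3_two, map_add, map_sub, _root_.map_mul,
      map_pow, map_ofNat, eval_X, map_zero, cons6_two, cons6_three, cons6_four, cons6_five]
      at hev
    norm_num at hev
  have key : ∀ k : Fin 3, (![φ K f, φ K g, φ K h] : Fin 3 → MvPolynomial (Fin 6) K) k = 0 := by
    intro k
    have := congrFun hz k
    simp only [Pi.smul_apply, smul_eq_mul, Pi.zero_apply] at this
    exact (mul_eq_zero.mp this).resolve_left hdet
  have hinj := φ_inj' K
  rw [injective_iff_map_eq_zero] at hinj
  exact ⟨hinj f (key 0), hinj g (key 1), hinj h (key 2)⟩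
end
end

section
/- The following eight identities hold in M₂(R): [xv − yt, x, x] = 2(xv − yt)t, [xv − yt, x, y] = 2(xu − yv)t, [xv − yt, y, x] = 2(xv − yt)v, [xv − yt, y, y] = 2(xu − yv)v, [xu − yv, x, x] = 2(xv − yt)v, [xu − yv, x, y] = 2(xu − yv)v, [xu − yv, y, x] = 2(xv − yt)u, and [xu − yv, y, y] = 2(xu − yv)u. -/
open Matrix MvPolynomial

noncomputable section

variable (K : Type*) [Field K] [CharZero K]

set_option maxHeartbeats 1000000 in
set_option linter.unusedSectionVars false in
lemma aux1 : ⁅⁅v K • x K - t K • y K, x K⁆, x K⁆ = (2 * t K) • (v K • x K - t K • y K) := by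
  rw [← Matrix.ext_iff]
  simp only [x, y, t, u, v, Ring.lie_def, Matrix.trace, Matrix.diag,
    Matrix.sub_apply, Matrix.smul_apply, Matrix.mul_apply,
    Fin.sum_univ_two, Fin.forall_fin_two,
    Matrix.cons_val', Matrix.cons_val_zero, Matrix.cons_val_one,
    Matrix.head_cons, Matrix.empty_val', Matrix.cons_val_fin_one,
    Matrix.head_fin_const, Matrix.of_apply, smul_eq_mul]
  and_intros <;> ring

set_option maxHeartbeats 1000000 in
set_option linter.unusedSectionVars false in
lemma aux2 : ⁅⁅v K • x K - t K • y K, x K⁆, y K⁆ = (2 * t K) • (u K • x K - v K • y K) := by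
  rw [← Matrix.ext_iff]
  simp only [x, y, t, u, v, Ring.lie_def, Matrix.trace, Matrix.diag,
    Matrix.sub_apply, Matrix.smul_apply, Matrix.mul_apply,
    Fin.sum_univ_two, Fin.forall_fin_two,
    Matrix.cons_val', Matrix.cons_val_zero, Matrix.cons_val_one,
    Matrix.head_cons, Matrix.empty_val', Matrix.cons_val_fin_one,
    Matrix.head_fin_const, Matrix.of_apply, smul_eq_mul]
  and_intros <;> ring

set_option maxHeartbeats 1000000 in
set_option linter.unusedSectionVars false in
lemma aux3 : ⁅⁅v K • x K - t K • y K, y K⁆, x K⁆ = (2 * v K) • (v K • x K - t K • y K) := by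
  rw [← Matrix.ext_iff]
  simp only [x, y, t, u, v, Ring.lie_def, Matrix.trace, Matrix.diag,
    Matrix.sub_apply, Matrix.smul_apply, Matrix.mul_apply,
    Fin.sum_univ_two, Fin.forall_fin_two,
    Matrix.cons_val', Matrix.cons_val_zero, Matrix.cons_val_one,
    Matrix.head_cons, Matrix.empty_val', Matrix.cons_val_fin_one,
    Matrix.head_fin_const, Matrix.of_apply, smul_eq_mul]
  and_intros <;> ring

set_option maxHeartbeats 1000000 in
set_option linter.unusedSectionVars false in
lemma aux4 : ⁅⁅v K • x K - t K • y K, y K⁆, y K⁆ = (2 * v K) • (u K • x K - v K • y K) := by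
  rw [← Matrix.ext_iff]
  simp only [x, y, t, u, v, Ring.lie_def, Matrix.trace, Matrix.diag,
    Matrix.sub_apply, Matrix.smul_apply, Matrix.mul_apply,
    Fin.sum_univ_two, Fin.forall_fin_two,
    Matrix.cons_val', Matrix.cons_val_zero, Matrix.cons_val_one,
    Matrix.head_cons, Matrix.empty_val', Matrix.cons_val_fin_one,
    Matrix.head_fin_const, Matrix.of_apply, smul_eq_mul]
  and_intros <;> ring

set_option maxHeartbeats 1000000 in
set_option linter.unusedSectionVars false in
lemma aux5 : ⁅⁅u K • x K - v K • y K, x K⁆, x K⁆ = (2 * v K) • (v K • x K - t K • y K) := by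
  rw [← Matrix.ext_iff]
  simp only [x, y, t, u, v, Ring.lie_def, Matrix.trace, Matrix.diag,
    Matrix.sub_apply, Matrix.smul_apply, Matrix.mul_apply,
    Fin.sum_univ_two, Fin.forall_fin_two,
    Matrix.cons_val', Matrix.cons_val_zero, Matrix.cons_val_one,
    Matrix.head_cons, Matrix.empty_val', Matrix.cons_val_fin_one,
    Matrix.head_fin_const, Matrix.of_apply, smul_eq_mul]
  and_intros <;> ring

set_option maxHeartbeats 1000000 in
set_option linter.unusedSectionVars false in
lemma aux6 : ⁅⁅u K • x K - v K • y K, x K⁆, y K⁆ = (2 * v K) • (u K • x K - v K • y K) := by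
  rw [← Matrix.ext_iff]
  simp only [x, y, t, u, v, Ring.lie_def, Matrix.trace, Matrix.diag,
    Matrix.sub_apply, Matrix.smul_apply, Matrix.mul_apply,
    Fin.sum_univ_two, Fin.forall_fin_two,
    Matrix.cons_val', Matrix.cons_val_zero, Matrix.cons_val_one,
    Matrix.head_cons, Matrix.empty_val', Matrix.cons_val_fin_one,
    Matrix.head_fin_const, Matrix.of_apply, smul_eq_mul]
  and_intros <;> ring

set_option maxHeartbeats 1000000 in
set_option linter.unusedSectionVars false in
lemma aux7 : ⁅⁅u K • x K - v K • y K, y K⁆, x K⁆ = (2 * u K) • (v K • x K - t K • y K) := by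
  rw [← Matrix.ext_iff]
  simp only [x, y, t, u, v, Ring.lie_def, Matrix.trace, Matrix.diag,
    Matrix.sub_apply, Matrix.smul_apply, Matrix.mul_apply,
    Fin.sum_univ_two, Fin.forall_fin_two,
    Matrix.cons_val', Matrix.cons_val_zero, Matrix.cons_val_one,
    Matrix.head_cons, Matrix.empty_val', Matrix.cons_val_fin_one,
    Matrix.head_fin_const, Matrix.of_apply, smul_eq_mul]
  and_intros <;> ring

set_option maxHeartbeats 1000000 in
set_option linter.unusedSectionVars false in
lemma aux8 : ⁅⁅u K • x K - v K • y K, y K⁆, y K⁆ = (2 * u K) • (u K • x K - v K • y K) := by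
  rw [← Matrix.ext_iff]
  simp only [x, y, t, u, v, Ring.lie_def, Matrix.trace, Matrix.diag,
    Matrix.sub_apply, Matrix.smul_apply, Matrix.mul_apply,
    Fin.sum_univ_two, Fin.forall_fin_two,
    Matrix.cons_val', Matrix.cons_val_zero, Matrix.cons_val_one,
    Matrix.head_cons, Matrix.empty_val', Matrix.cons_val_fin_one,
    Matrix.head_fin_const, Matrix.of_apply, smul_eq_mul]
  and_intros <;> ring

/-- The eight identities `[xv − yt, x, x] = 2(xv − yt)t`, ..., `[xu − yv, y, y] = 2(xu − yv)u`
in `M₂(R)`. -/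
theorem stmt_4 :
    ⁅⁅v K • x K - t K • y K, x K⁆, x K⁆ = (2 * t K) • (v K • x K - t K • y K) ∧
    ⁅⁅v K • x K - t K • y K, x K⁆, y K⁆ = (2 * t K) • (u K • x K - v K • y K) ∧
    ⁅⁅v K • x K - t K • y K, y K⁆, x K⁆ = (2 * v K) • (v K • x K - t K • y K) ∧
    ⁅⁅v K • x K - t K • y K, y K⁆, y K⁆ = (2 * v K) • (u K • x K - v K • y K) ∧
    ⁅⁅u K • x K - v K • y K, x K⁆, x K⁆ = (2 * v K) • (v K • x K - t K • y K) ∧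
    ⁅⁅u K • x K - v K • y K, x K⁆, y K⁆ = (2 * v K) • (u K • x K - v K • y K) ∧
    ⁅⁅u K • x K - v K • y K, y K⁆, x K⁆ = (2 * u K) • (v K • x K - t K • y K) ∧
    ⁅⁅u K • x K - v K • y K, y K⁆, y K⁆ = (2 * u K) • (u K • x K - v K • y K) := by
  exact ⟨aux1 K, aux2 K, aux3 K, aux4 K, aux5 K, aux6 K, aux7 K, aux8 K⟩
end
end

section
/- For all natural numbers a, c ≥ 0 and b ≥ 1, the following identity holds in M₂(R): 2^{a+b+c+1}·(xv − yt)·tᵃuᵇvᶜ = [x,y,y]·(ad y)^{2b−1}·(ad x)^{2a+1}·(ad y ad x)ᶜ. -/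
open Matrix MvPolynomial

noncomputable section

variable (K : Type*) [Field K] [CharZero K]

/-- The right adjoint action `z ↦ z(ad w) = [z,w]`. -/
def ad (w z : Matrix (Fin 2) (Fin 2) (MvPolynomial (Fin 6) K)) :
    Matrix (Fin 2) (Fin 2) (MvPolynomial (Fin 6) K) := ⁅z, w⁆

set_option maxHeartbeats 1000000

lemma E1 : ⁅⁅x K, y K⁆, y K⁆ = (2 * u K) • x K - (2 * v K) • y K := by
  refine Matrix.ext fun i j => ?_
  fin_cases i <;> fin_cases j <;>
    simp [Ring.lie_def, x, y, u, v, Matrix.mul_apply, Fin.sum_univ_two, Matrix.trace,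
      Matrix.diag] <;> ring

lemma E2 : ⁅⁅x K, y K⁆, x K⁆ = (2 * v K) • x K - (2 * t K) • y K := by
  refine Matrix.ext fun i j => ?_
  fin_cases i <;> fin_cases j <;>
    simp [Ring.lie_def, x, y, t, v, Matrix.mul_apply, Fin.sum_univ_two, Matrix.trace,
      Matrix.diag] <;> ring

lemma sub_smul_congr (p q p' q' : MvPolynomial (Fin 6) K) (hp : p = p') (hq : q = q') :
    p • x K - q • y K = p' • x K - q' • y K := by rw [hp, hq]

lemma yS (g h : MvPolynomial (Fin 6) K) :
    ad K (y K) (g • x K - h • y K) = g • ⁅x K, y K⁆ := by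
  rw [ad, Ring.lie_def, Ring.lie_def, sub_mul, mul_sub, smul_mul_assoc, smul_mul_assoc,
    mul_smul_comm, mul_smul_comm, smul_sub]
  abel

lemma xS (g h : MvPolynomial (Fin 6) K) :
    ad K (x K) (g • x K - h • y K) = h • ⁅x K, y K⁆ := by
  rw [ad, Ring.lie_def, Ring.lie_def, sub_mul, mul_sub, smul_mul_assoc, smul_mul_assoc,
    mul_smul_comm, mul_smul_comm, smul_sub]
  abel

lemma yC (f : MvPolynomial (Fin 6) K) :
    ad K (y K) (f • ⁅x K, y K⁆) = (2 * u K * f) • x K - (2 * v K * f) • y K := by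
  rw [ad, Ring.lie_def (f • _), smul_mul_assoc, mul_smul_comm, ← smul_sub, ← Ring.lie_def, E1, smul_sub, smul_smul, smul_smul, mul_comm f, mul_comm f]

lemma xC (f : MvPolynomial (Fin 6) K) :
    ad K (x K) (f • ⁅x K, y K⁆) = (2 * v K * f) • x K - (2 * t K * f) • y K := by
  rw [ad, Ring.lie_def (f • _), smul_mul_assoc, mul_smul_comm, ← smul_sub, ← Ring.lie_def, E2, smul_sub, smul_smul, smul_smul, mul_comm f, mul_comm f]

lemma pow_y (n : ℕ) (f : MvPolynomial (Fin 6) K) :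
    (ad K (y K))^[2 * n] (f • ⁅x K, y K⁆) = ((2 * u K) ^ n * f) • ⁅x K, y K⁆ := by
  induction n generalizing f with
  | zero => simp
  | succ n ih =>
    have : 2 * (n + 1) = 2 * n + 2 := by ring
    rw [this, Function.iterate_add_apply]
    have h2 : (ad K (y K))^[2] (f • ⁅x K, y K⁆) = (2 * u K * f) • ⁅x K, y K⁆ := by
      show ad K (y K) (ad K (y K) (f • ⁅x K, y K⁆)) = _
      rw [yC, yS]
    rw [h2, ih]
    congr 1
    ring

lemma pow_x (n : ℕ) (f : MvPolynomial (Fin 6) K) :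
    (ad K (x K))^[2 * n] (f • ((2 * v K) • x K - (2 * t K) • y K)) =
      ((2 * t K) ^ n * f) • ((2 * v K) • x K - (2 * t K) • y K) := by
  induction n generalizing f with
  | zero => simp
  | succ n ih =>
    have : 2 * (n + 1) = 2 * n + 2 := by ring
    rw [this, Function.iterate_add_apply]
    have h2 : (ad K (x K))^[2] (f • ((2 * v K) • x K - (2 * t K) • y K)) =
        (2 * t K * f) • ((2 * v K) • x K - (2 * t K) • y K) := by
      show ad K (x K) (ad K (x K) (f • ((2 * v K) • x K - (2 * t K) • y K))) = _
      rw [smul_sub, smul_smul, smul_smul, xS, xC]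
      rw [smul_sub, smul_smul, smul_smul]
      exact sub_smul_congr K _ _ _ _ (by ring) (by ring)
    rw [h2, ih]
    congr 1
    ring

lemma pow_c (n : ℕ) (f : MvPolynomial (Fin 6) K) :
    (ad K (x K) ∘ ad K (y K))^[n] (f • ((2 * v K) • x K - (2 * t K) • y K)) =
      ((2 * v K) ^ n * f) • ((2 * v K) • x K - (2 * t K) • y K) := by
  induction n generalizing f with
  | zero => simp
  | succ n ih =>
    rw [Function.iterate_succ_apply]
    have h2 : (ad K (x K) ∘ ad K (y K)) (f • ((2 * v K) • x K - (2 * t K) • y K)) =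
        (2 * v K * f) • ((2 * v K) • x K - (2 * t K) • y K) := by
      show ad K (x K) (ad K (y K) (f • ((2 * v K) • x K - (2 * t K) • y K))) = _
      rw [smul_sub, smul_smul, smul_smul, yS, xC]
      rw [smul_sub, smul_smul, smul_smul]
      exact sub_smul_congr K _ _ _ _ (by ring) (by ring)
    rw [h2, ih]
    congr 1
    ring

/-- For `a, c ≥ 0` and `b ≥ 1`:
`2^{a+b+c+1}(xv − yt)tᵃuᵇvᶜ = [x,y,y](ad y)^{2b−1}(ad x)^{2a+1}(ad y ad x)ᶜ`. -/
theorem stmt_5 (a b c : ℕ) (hb : 1 ≤ b) :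
    ((2 : MvPolynomial (Fin 6) K) ^ (a + b + c + 1) * t K ^ a * u K ^ b * v K ^ c) •
        (v K • x K - t K • y K) =
      (ad K (x K) ∘ ad K (y K))^[c]
        ((ad K (x K))^[2 * a + 1] ((ad K (y K))^[2 * b - 1] ⁅⁅x K, y K⁆, y K⁆)) := by
  obtain ⟨b', rfl⟩ : ∃ b', b = b' + 1 := ⟨b - 1, by omega⟩
  have hbm : 2 * (b' + 1) - 1 = 2 * b' + 1 := by omega
  rw [hbm]
  -- stage 1 : (ad y)^[2b'+1] ⁅⁅x,y⁆,y⁆ = (2u)^(b'+1) • ⁅x,y⁆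
  have s1 : (ad K (y K))^[2 * b' + 1] ⁅⁅x K, y K⁆, y K⁆ =
      ((2 * u K) ^ (b' + 1)) • ⁅x K, y K⁆ := by
    rw [Function.iterate_add_apply]
    have h1 : (ad K (y K))^[1] ⁅⁅x K, y K⁆, y K⁆ = (2 * u K) • ⁅x K, y K⁆ := by
      show ad K (y K) ⁅⁅x K, y K⁆, y K⁆ = _
      rw [E1, yS]
    rw [h1, pow_y, ← pow_succ]
  rw [s1]
  -- stage 2 : (ad x)^[2a+1]
  have s2 : (ad K (x K))^[2 * a + 1] (((2 * u K) ^ (b' + 1)) • ⁅x K, y K⁆) =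
      ((2 * t K) ^ a * (2 * u K) ^ (b' + 1)) • ((2 * v K) • x K - (2 * t K) • y K) := by
    rw [Function.iterate_add_apply]
    have h1 : (ad K (x K))^[1] (((2 * u K) ^ (b' + 1)) • ⁅x K, y K⁆) =
        ((2 * u K) ^ (b' + 1)) • ((2 * v K) • x K - (2 * t K) • y K) := by
      show ad K (x K) (((2 * u K) ^ (b' + 1)) • ⁅x K, y K⁆) = _
      rw [xC, smul_sub, smul_smul, smul_smul]
      exact sub_smul_congr K _ _ _ _ (by ring) (by ring)
    rw [h1, pow_x]
  rw [s2, pow_c]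
  rw [smul_sub, smul_smul, smul_smul, smul_sub, smul_smul, smul_smul]
  exact sub_smul_congr K _ _ _ _ (by ring) (by ring)
end
end

section
/- For all natural numbers a, c ≥ 0, the following identity holds in M₂(R): 2^{a+c+1}·(xv − yt)·tᵃvᶜ = [x,y,x]·(ad x)^{2a}·(ad y ad x)ᶜ. -/
open Matrix MvPolynomial

noncomputable section

variable (K : Type*) [Field K] [CharZero K]

set_option maxHeartbeats 2000000

lemma key1 : ⁅⁅x K, y K⁆, x K⁆ = (2 : MvPolynomial (Fin 6) K) • (v K • x K - t K • y K) := by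
  refine Matrix.ext fun i j => ?_
  fin_cases i <;> fin_cases j <;>
    simp [Ring.lie_def, x, y, t, v, Matrix.mul_apply, Matrix.trace, Matrix.diag,
      Fin.sum_univ_two] <;> ring

lemma ad_smul (w z : Matrix (Fin 2) (Fin 2) (MvPolynomial (Fin 6) K))
    (r : MvPolynomial (Fin 6) K) : ad K w (r • z) = r • ad K w z := by
  simp [ad, smul_lie, Ring.lie_def, Matrix.smul_mul, Matrix.mul_smul, smul_sub]

lemma key2 : ad K (x K) (ad K (x K) (v K • x K - t K • y K)) =
    (2 * t K) • (v K • x K - t K • y K) := by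
  refine Matrix.ext fun i j => ?_
  fin_cases i <;> fin_cases j <;>
    simp [ad, Ring.lie_def, x, y, t, v, Matrix.mul_apply, Matrix.trace, Matrix.diag,
      Fin.sum_univ_two, Matrix.sub_apply, Matrix.smul_apply, smul_eq_mul] <;> ring

lemma key3 : ad K (x K) (ad K (y K) (v K • x K - t K • y K)) =
    (2 * v K) • (v K • x K - t K • y K) := by
  refine Matrix.ext fun i j => ?_
  fin_cases i <;> fin_cases j <;>
    simp [ad, Ring.lie_def, x, y, t, v, Matrix.mul_apply, Matrix.trace, Matrix.diag,
      Fin.sum_univ_two, Matrix.sub_apply, Matrix.smul_apply, smul_eq_mul] <;> ring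

lemma stepA (a : ℕ) : (ad K (x K))^[2*a] ⁅⁅x K, y K⁆, x K⁆ =
    ((2 : MvPolynomial (Fin 6) K)^(a+1) * t K ^ a) • (v K • x K - t K • y K) := by
  induction a with
  | zero => simpa using key1 K
  | succ a ih =>
    have h2 : 2*(a+1) = 2 + 2*a := by ring
    rw [h2, Function.iterate_add_apply, ih, Function.iterate_succ_apply,
      Function.iterate_one, ad_smul, ad_smul, key2, smul_smul]
    congr 1
    ring

/-- For `a, c ≥ 0`: `2^{a+c+1}(xv − yt)tᵃvᶜ = [x,y,x](ad x)^{2a}(ad y ad x)ᶜ`. -/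
theorem stmt_6 (a c : ℕ) :
    ((2 : MvPolynomial (Fin 6) K) ^ (a + c + 1) * t K ^ a * v K ^ c) •
        (v K • x K - t K • y K) =
      (ad K (x K) ∘ ad K (y K))^[c] ((ad K (x K))^[2 * a] ⁅⁅x K, y K⁆, x K⁆) := by
  rw [stepA]
  induction c with
  | zero => simp
  | succ c ih =>
    rw [Function.iterate_succ_apply', ← ih, Function.comp_apply, ad_smul, ad_smul, key3, smul_smul]
    congr 1
    ring
end
end

section
/- For all natural numbers b, c ≥ 0, the following identity holds in M₂(R): 2^{b+c+1}·(xu − yv)·uᵇvᶜ = [x,y,y]·(ad y)^{2b}·(ad x ad y)ᶜ. -/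
set_option maxHeartbeats 1000000

open Matrix MvPolynomial

noncomputable section

variable (K : Type*) [Field K] [CharZero K]

lemma lem0 : ⁅⁅x K, y K⁆, y K⁆ = (2 : MvPolynomial (Fin 6) K) • (u K • x K - v K • y K) := by
  refine Matrix.ext fun i j => ?_
  fin_cases i <;> fin_cases j <;>
    simp [x, y, u, v, Ring.lie_def, Matrix.trace, Matrix.diag, Matrix.mul_apply,
      Fin.sum_univ_succ, Matrix.smul_apply, Matrix.sub_apply] <;> ring

lemma lemA (f : MvPolynomial (Fin 6) K) :
    ⁅⁅f • (u K • x K - v K • y K), y K⁆, y K⁆ =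
      (2 * u K * f) • (u K • x K - v K • y K) := by
  refine Matrix.ext fun i j => ?_
  fin_cases i <;> fin_cases j <;>
    simp [x, y, u, v, Ring.lie_def, Matrix.trace, Matrix.diag, Matrix.mul_apply,
      Fin.sum_univ_succ, Matrix.smul_apply, Matrix.sub_apply] <;> ring

lemma lemB (f : MvPolynomial (Fin 6) K) :
    ⁅⁅f • (u K • x K - v K • y K), x K⁆, y K⁆ =
      (2 * v K * f) • (u K • x K - v K • y K) := by
  refine Matrix.ext fun i j => ?_
  fin_cases i <;> fin_cases j <;>
    simp [x, y, u, v, Ring.lie_def, Matrix.trace, Matrix.diag, Matrix.mul_apply,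
      Fin.sum_univ_succ, Matrix.smul_apply, Matrix.sub_apply] <;> ring

lemma helperB (b : ℕ) :
    (ad K (y K))^[2 * b] ⁅⁅x K, y K⁆, y K⁆ =
      ((2 : MvPolynomial (Fin 6) K) ^ (b + 1) * u K ^ b) • (u K • x K - v K • y K) := by
  induction b with
  | zero =>
      rw [Nat.mul_zero, Function.iterate_zero_apply, lem0]
      congr 1
      ring
  | succ b ih =>
      have h2 : 2 * (b + 1) = (2 * b) + 1 + 1 := by ring
      rw [h2, Function.iterate_succ_apply', Function.iterate_succ_apply', ih]
      show ⁅⁅_, y K⁆, y K⁆ = _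
      rw [lemA]
      congr 1
      ring

/-- For `b, c ≥ 0`: `2^{b+c+1}(xu − yv)uᵇvᶜ = [x,y,y](ad y)^{2b}(ad x ad y)ᶜ`. -/
theorem stmt_8 (b c : ℕ) :
    ((2 : MvPolynomial (Fin 6) K) ^ (b + c + 1) * u K ^ b * v K ^ c) •
        (u K • x K - v K • y K) =
      (ad K (y K) ∘ ad K (x K))^[c] ((ad K (y K))^[2 * b] ⁅⁅x K, y K⁆, y K⁆) := by
  induction c with
  | zero =>
      rw [Function.iterate_zero_apply, helperB]
      congr 1
      ring
  | succ c ih =>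
      rw [Function.iterate_succ_apply', ← ih]
      show _ = ⁅⁅_, x K⁆, y K⁆
      rw [lemB]
      congr 1
      ring
end
end

section
/- Let S be a commutative ring, let g, A, B ∈ S satisfy A² = B²·g + 2B, and let M be a 3×3 matrix over S with M³ = g·M. Set Q = 1 + A·M + B·M² (where 1 denotes the 3×3 identity matrix). Then Q² = 1 + 2A(1 + Bg)·M + (A² + B²g + 2B)·M², and consequently 2A²·(Q − 1) − B·(Q² − 1) = 2AB·M. -/
open Matrix

/-- If `A² = B²g + 2B` in a commutative ring `S`, `M ∈ M₃(S)` satisfies `M³ = g·M`, and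
`Q = 1 + A·M + B·M²`, then `Q² = 1 + 2A(1 + Bg)·M + (A² + B²g + 2B)·M²` and
`2A²·(Q − 1) − B·(Q² − 1) = 2AB·M`. -/
theorem stmt_14 (S : Type*) [CommRing S] (g A B : S)
    (hAB : A ^ 2 = B ^ 2 * g + 2 * B)
    (M : Matrix (Fin 3) (Fin 3) S) (hM : M ^ 3 = g • M) :
    (1 + A • M + B • M ^ 2) ^ 2 =
        1 + (2 * A * (1 + B * g)) • M + (A ^ 2 + B ^ 2 * g + 2 * B) • M ^ 2 ∧
    (2 * A ^ 2) • ((1 + A • M + B • M ^ 2) - 1) -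
        B • ((1 + A • M + B • M ^ 2) ^ 2 - 1) = (2 * A * B) • M := by
  have e2 : M * M = M ^ 2 := (pow_two M).symm
  have e3 : M * M ^ 2 = M ^ 3 := (pow_succ' M 2).symm
  have e3' : M ^ 2 * M = M ^ 3 := (pow_succ M 2).symm
  have e4 : M ^ 2 * M ^ 2 = M ^ 4 := by rw [← pow_add]
  have h4 : M ^ 4 = g • M ^ 2 := by
    rw [show (4:ℕ) = 3 + 1 from rfl, pow_succ, hM, smul_mul_assoc, ← pow_two]
  have h1 : (1 + A • M + B • M ^ 2) ^ 2 =
      1 + (2 * A * (1 + B * g)) • M + (A ^ 2 + B ^ 2 * g + 2 * B) • M ^ 2 := by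
    have : (1 + A • M + B • M ^ 2) ^ 2 =
        1 + (2*A) • M + ((2*B) • M^2 + (A*A) • M^2) + (2*(A*B)) • M^3 + (B*B) • M^4 := by
      rw [sq]
      simp only [add_mul, mul_add, one_mul, mul_one, smul_mul_assoc, mul_smul_comm,
        smul_smul, e2, e3, e3', e4]
      module
    rw [this, hM, h4, smul_smul, smul_smul]
    module
  refine ⟨h1, ?_⟩
  rw [h1, hAB]
  module
end

section
/- Let g ∈ ℂ and let P be a 3×3 complex matrix with P³ = g·P. Then the matrix exponential satisfies exp(P) = I₃ + A·P + B·P², where A = ∑_{k≥0} gᵏ/(2k+1)! and B = ∑_{k≥0} gᵏ/(2k+2)! (these series converge absolutely; when g ≠ 0 they equal sinh(√g)/√g and (cosh(√g) − 1)/g respectively). -/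
open Matrix
set_option maxHeartbeats 1000000

lemma summ_aux (g : ℂ) (c : ℕ) :
    Summable (fun k : ℕ => g ^ k / ((2 * k + c).factorial : ℂ)) := by
  apply Summable.of_norm_bounded (g := fun k => ‖g‖ ^ k / (k.factorial : ℝ))
    (Real.summable_pow_div_factorial ‖g‖)
  intro k
  rw [norm_div, norm_pow, Complex.norm_natCast]
  apply div_le_div_of_nonneg_left ?_ ?_ ?_
  · positivity
  · exact_mod_cast Nat.factorial_pos k
  · exact_mod_cast Nat.factorial_le (by omega)

/-- Baker's formula: if `P³ = g·P` for a complex 3×3 matrix `P`, then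
`exp(P) = I₃ + A·P + B·P²` where `A = ∑_{k≥0} gᵏ/(2k+1)!` and `B = ∑_{k≥0} gᵏ/(2k+2)!`
(both series converge absolutely). -/
theorem stmt_16 (g : ℂ) (P : Matrix (Fin 3) (Fin 3) ℂ) (hP : P ^ 3 = g • P) :
    Summable (fun k : ℕ => g ^ k / ((2 * k + 1).factorial : ℂ)) ∧
    Summable (fun k : ℕ => g ^ k / ((2 * k + 2).factorial : ℂ)) ∧
    NormedSpace.exp P =
      1 + (∑' k : ℕ, g ^ k / ((2 * k + 1).factorial : ℂ)) • P +
        (∑' k : ℕ, g ^ k / ((2 * k + 2).factorial : ℂ)) • P ^ 2 := by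
  refine ⟨summ_aux g 1, summ_aux g 2, ?_⟩
  have hodd : ∀ k : ℕ, P ^ (2 * k + 1) = g ^ k • P := by
    intro k
    induction k with
    | zero => simp
    | succ k ih =>
      have : 2 * (k + 1) + 1 = (2 * k + 1) + 3 - 1 := by omega
      calc P ^ (2 * (k + 1) + 1) = P ^ (2 * k + 1) * P ^ 2 := by
            rw [← pow_add]; ring_nf
        _ = g ^ k • (P * P ^ 2) := by rw [ih, smul_mul_assoc]
        _ = g ^ k • (g • P) := by rw [← pow_succ']; rw [hP]
        _ = g ^ (k + 1) • P := by rw [smul_smul, pow_succ, mul_comm]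
  have heven : ∀ k : ℕ, P ^ (2 * k + 2) = g ^ k • P ^ 2 := by
    intro k
    calc P ^ (2 * k + 2) = P ^ (2 * k + 1) * P := by rw [← pow_succ]
      _ = g ^ k • (P * P) := by rw [hodd, smul_mul_assoc]
      _ = g ^ k • P ^ 2 := by rw [← pow_two]
  set f : ℕ → Matrix (Fin 3) (Fin 3) ℂ := fun n => ((n.factorial : ℂ))⁻¹ • P ^ n with hf
  letI : SeminormedRing (Matrix (Fin 3) (Fin 3) ℂ) := Matrix.linftyOpSemiNormedRing
  letI : NormedRing (Matrix (Fin 3) (Fin 3) ℂ) := Matrix.linftyOpNormedRing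
  letI : NormedAlgebra ℂ (Matrix (Fin 3) (Fin 3) ℂ) := Matrix.linftyOpNormedAlgebra
  have hfs : Summable f := NormedSpace.expSeries_summable' (𝕂 := ℂ) P
  have hfe : Summable (fun k => f (2 * k)) :=
    hfs.comp_injective (fun a b h => by omega)
  have hfo : Summable (fun k => f (2 * k + 1)) :=
    hfs.comp_injective (fun a b h => by omega)
  have hoddterm : ∀ k : ℕ, f (2 * k + 1) = (g ^ k / ((2 * k + 1).factorial : ℂ)) • P := by
    intro k
    simp only [hf]
    rw [hodd k, smul_smul, mul_comm, ← div_eq_mul_inv]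
  have heventerm : ∀ k : ℕ, f (2 * k + 2) = (g ^ k / ((2 * k + 2).factorial : ℂ)) • P ^ 2 := by
    intro k
    simp only [hf]
    rw [heven k, smul_smul, mul_comm, ← div_eq_mul_inv]
  have key : NormedSpace.exp P = ∑' n, f n := by rw [NormedSpace.exp_eq_tsum ℂ]
  rw [key, ← tsum_even_add_odd hfe hfo]
  have h0 : (∑' k, f (2 * k)) = f 0 + ∑' k, f (2 * (k + 1)) := by
    rw [Summable.tsum_eq_zero_add hfe]
  rw [h0]
  have hf0 : f 0 = 1 := by simp [hf]
  have he2 : (∑' k, f (2 * (k + 1))) = (∑' k : ℕ, g ^ k / ((2 * k + 2).factorial : ℂ)) • P ^ 2 := by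
    rw [← Summable.tsum_smul_const (summ_aux g 2)]
    congr 1; funext k
    rw [← heventerm k]; congr 1
  have ho : (∑' k, f (2 * k + 1)) = (∑' k : ℕ, g ^ k / ((2 * k + 1).factorial : ℂ)) • P := by
    rw [← Summable.tsum_smul_const (summ_aux g 1)]
    exact tsum_congr hoddterm
  rw [hf0, he2, ho]
  abel
end

section
/- Let S = ℝ[a,b] be the polynomial ring in two commuting variables over ℝ, and let U = !![0, a; 0, 0] and V = !![0, 0; b, 0] be matrices in M₂(S). Then there is no matrix W in the unital ℝ-subalgebra of M₂(S) generated by U and V such that for all real numbers α, β, exp(W(α,β)) = ((1 + U)(1 + V))(α,β), where Z(α,β) denotes the real 2×2 matrix obtained from Z ∈ M₂(S) by evaluating every entry at a = α, b = β, and exp denotes the matrix exponential. (Note that U² = V² = 0, so (1 + U)(1 + V) = exp(U)·exp(V) as polynomial matrices; thus the solution W of exp(W) = exp(U)exp(V) exists only in the completion of the algebra generated by U and V, not in the algebra itself.) -/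
open Matrix MvPolynomial

noncomputable section

/-- `U = !![0, a; 0, 0]` over `S = ℝ[a,b]`, realized as `MvPolynomial (Fin 2) ℝ`
with `a = X 0`, `b = X 1`. -/
def U : Matrix (Fin 2) (Fin 2) (MvPolynomial (Fin 2) ℝ) := !![0, X 0; 0, 0]

/-- `V = !![0, 0; b, 0]` over `S = ℝ[a,b]`. -/
def V : Matrix (Fin 2) (Fin 2) (MvPolynomial (Fin 2) ℝ) := !![0, 0; X 1, 0]

/-- Evaluation of a polynomial matrix `Z ∈ M₂(ℝ[a,b])` at `a = α`, `b = β`. -/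
def eval₂Mat (α β : ℝ) (Z : Matrix (Fin 2) (Fin 2) (MvPolynomial (Fin 2) ℝ)) :
    Matrix (Fin 2) (Fin 2) ℝ := Z.map (aeval ![α, β])

open scoped Nat

/-- `F d = ∑ d^n/(2n)!` (this is `cosh √d`, resp. `cos √(-d)`). -/
def myF (d : ℝ) : ℝ := ∑' n : ℕ, d ^ n / (2 * n)!

/-- `G d = ∑ d^n/(2n+1)!`. -/
def myG (d : ℝ) : ℝ := ∑' n : ℕ, d ^ n / (2 * n + 1)!

lemma summable_aux (d : ℝ) (g : ℕ → ℕ) (hg : ∀ n, n ≤ g n) :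
    Summable (fun n : ℕ => d ^ n / (g n)!) := by
  apply Summable.of_norm
  refine Summable.of_nonneg_of_le (fun n => norm_nonneg _) (fun n => ?_)
    (Real.summable_pow_div_factorial |d|)
  rw [norm_div, norm_pow, Real.norm_eq_abs, Real.norm_natCast]
  gcongr
  exact hg n

lemma summable_F (d : ℝ) : Summable (fun n : ℕ => d ^ n / (2 * n)!) :=
  summable_aux d _ (fun n => by omega)

lemma summable_G (d : ℝ) : Summable (fun n : ℕ => d ^ n / (2 * n + 1)!) :=
  summable_aux d _ (fun n => by omega)

/-- If `M² = d•1` then `exp M = F(d)•1 + G(d)•M`. -/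
lemma exp_eq_of_sq (M : Matrix (Fin 2) (Fin 2) ℝ) (d : ℝ)
    (h : M ^ 2 = d • (1 : Matrix (Fin 2) (Fin 2) ℝ)) :
    NormedSpace.exp M = myF d • (1 : Matrix (Fin 2) (Fin 2) ℝ) + myG d • M := by
  have hev : ∀ k : ℕ, M ^ (2 * k) = d ^ k • (1 : Matrix (Fin 2) (Fin 2) ℝ) := by
    intro k; rw [pow_mul, h, smul_pow, one_pow]
  have hodd : ∀ k : ℕ, M ^ (2 * k + 1) = d ^ k • M := by
    intro k; rw [pow_succ, hev, smul_mul_assoc, one_mul]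
  rw [NormedSpace.exp_eq_tsum ℝ]
  refine (HasSum.even_add_odd ?_ ?_).tsum_eq
  · have h1 : (fun k : ℕ => ((((2 * k)! : ℝ))⁻¹ • M ^ (2 * k)))
        = fun k : ℕ => (d ^ k / (2 * k)!) • (1 : Matrix (Fin 2) (Fin 2) ℝ) := by
      funext k; rw [hev, smul_smul, div_eq_inv_mul]
    rw [h1]
    exact ((summable_F d).hasSum).smul_const _
  · have h1 : (fun k : ℕ => ((((2 * k + 1)! : ℝ))⁻¹ • M ^ (2 * k + 1)))
        = fun k : ℕ => (d ^ k / (2 * k + 1)!) • M := by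
      funext k; rw [hodd, smul_smul, div_eq_inv_mul]
    rw [h1]
    exact ((summable_G d).hasSum).smul_const _

/-- Cayley–Hamilton for a traceless 2×2 matrix. -/
lemma sq_eq_of_trace_zero (M : Matrix (Fin 2) (Fin 2) ℝ) (h : M.trace = 0) :
    M ^ 2 = (-M.det) • (1 : Matrix (Fin 2) (Fin 2) ℝ) := by
  rw [Matrix.trace_fin_two] at h
  have h' : M 1 1 = -M 0 0 := by linarith
  ext i j
  rw [pow_two]
  fin_cases i <;> fin_cases j <;>
    simp [Matrix.mul_apply, Fin.sum_univ_two, Matrix.det_fin_two, Matrix.one_apply, h'] <;>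
    ring

/-- The `cosh² - sinh²`-style identity for `myF`/`myG`. -/
lemma myF_sq (d : ℝ) : myF d ^ 2 - d * myG d ^ 2 = 1 := by
  set M : Matrix (Fin 2) (Fin 2) ℝ := !![0, 1; d, 0] with hMdef
  have hM : M ^ 2 = d • (1 : Matrix (Fin 2) (Fin 2) ℝ) := by
    ext i j
    rw [pow_two]
    fin_cases i <;> fin_cases j <;>
      simp [hMdef, Matrix.mul_apply, Fin.sum_univ_two, Matrix.one_apply]
  have hM' : (-M) ^ 2 = d • (1 : Matrix (Fin 2) (Fin 2) ℝ) := by rw [neg_sq, hM]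
  have h1 : NormedSpace.exp (M + (-M)) = NormedSpace.exp M * NormedSpace.exp (-M) :=
    Matrix.exp_add_of_commute M (-M) ((Commute.refl M).neg_right)
  rw [add_neg_cancel, NormedSpace.exp_zero, exp_eq_of_sq _ _ hM, exp_eq_of_sq _ _ hM'] at h1
  have h2 := congrArg (fun A : Matrix (Fin 2) (Fin 2) ℝ => A 0 0) h1
  simp [hMdef, Matrix.add_mul, Matrix.mul_add, Matrix.mul_apply, Fin.sum_univ_two,
    Matrix.one_apply] at h2
  linear_combination -h2

lemma mytrace_exp (M : Matrix (Fin 2) (Fin 2) ℝ) (h : M.trace = 0) :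
    (NormedSpace.exp M).trace = 2 * myF (-M.det) := by
  rw [exp_eq_of_sq M _ (sq_eq_of_trace_zero M h)]
  simp [Matrix.trace_add, Matrix.trace_smul, Matrix.trace_one, h]
  ring

/-- `det (exp M) = exp (trace M)` for 2×2 real matrices. -/
lemma mydet_exp (M : Matrix (Fin 2) (Fin 2) ℝ) :
    (NormedSpace.exp M).det = Real.exp M.trace := by
  set c : ℝ := M.trace / 2 with hc
  set M₀ : Matrix (Fin 2) (Fin 2) ℝ := M - c • 1 with hM₀
  have htr0 : M₀.trace = 0 := by
    simp [hM₀, Matrix.trace_sub, Matrix.trace_smul, Matrix.trace_one, hc]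
  have hsplit : NormedSpace.exp M
      = NormedSpace.exp (c • (1 : Matrix (Fin 2) (Fin 2) ℝ)) * NormedSpace.exp M₀ := by
    rw [← Matrix.exp_add_of_commute (c • 1) M₀ ((Commute.one_left M₀).smul_left c)]
    congr 1
    simp [hM₀]
  have hexp1 : NormedSpace.exp (c • (1 : Matrix (Fin 2) (Fin 2) ℝ))
      = Real.exp c • (1 : Matrix (Fin 2) (Fin 2) ℝ) := by
    rw [Matrix.smul_one_eq_diagonal, Matrix.exp_diagonal, Matrix.smul_one_eq_diagonal]
    funext i
    rw [Pi.exp_def]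
    simp [Real.exp_eq_exp_ℝ]
  have hM₀sq := sq_eq_of_trace_zero M₀ htr0
  have hdet0 : (NormedSpace.exp M₀).det = 1 := by
    rw [exp_eq_of_sq M₀ _ hM₀sq]
    have hd : (myF (-M₀.det) • (1 : Matrix (Fin 2) (Fin 2) ℝ) + myG (-M₀.det) • M₀).det
        = myF (-M₀.det) ^ 2 + myF (-M₀.det) * myG (-M₀.det) * M₀.trace
          + myG (-M₀.det) ^ 2 * M₀.det := by
      simp [Matrix.det_fin_two, Matrix.trace_fin_two, Matrix.one_apply]
      ring
    rw [hd, htr0]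
    have := myF_sq (-M₀.det)
    linarith
  rw [hsplit, Matrix.det_mul, hexp1, hdet0, Matrix.det_smul, Matrix.det_one]
  simp only [Fintype.card_fin, mul_one]
  rw [sq, ← Real.exp_add, hc]
  ring_nf

lemma myF_le_one_of_nonpos {d : ℝ} (hd : d ≤ 0) : myF d ≤ 1 := by
  have h : myF d = Real.cos (Real.sqrt (-d)) := by
    rw [Real.cos_eq_tsum]
    unfold myF
    congr 1
    funext n
    rw [pow_mul, Real.sq_sqrt (by linarith), ← mul_pow, neg_one_mul, neg_neg]
  rw [h]
  exact Real.cos_le_one _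

lemma myF_cube_le {d : ℝ} (hd : 0 ≤ d) : d ^ 3 / 720 ≤ myF d := by
  have h := Summable.le_tsum (summable_F d) 3 (fun j _ => by positivity)
  have h2 : d ^ 3 / ((2 * 3)! : ℝ) = d ^ 3 / 720 := by norm_num [Nat.factorial]
  rw [h2] at h
  exact h

lemma degree_le_zero_of_cube_bound (P : Polynomial ℝ)
    (hpos : ∀ x : ℝ, 1 ≤ x → 0 < P.eval x)
    (hbd : ∀ x : ℝ, 1 ≤ x → (P.eval x) ^ 3 ≤ 720 + 360 * x ^ 2) :
    P.degree ≤ 0 := by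
  by_contra hdeg
  push_neg at hdeg
  have hP0 : P ≠ 0 := fun h => by simp [h] at hdeg
  rcases le_or_gt P.leadingCoeff 0 with hlc | hlc
  · have ht := Polynomial.tendsto_atBot_of_leadingCoeff_nonpos P hdeg hlc
    have h1 : ∀ᶠ x : ℝ in Filter.atTop, P.eval x < 0 :=
      ht.eventually (Filter.eventually_lt_atBot 0)
    obtain ⟨x, hx1, hx2⟩ := (h1.and (Filter.eventually_ge_atTop 1)).exists
    exact absurd (hpos x hx2) (not_lt.mpr hx1.le)
  · set Q : Polynomial ℝ :=
      P ^ 3 - (Polynomial.C 720 + Polynomial.C 360 * Polynomial.X ^ 2) with hQ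
    have hd2 : (Polynomial.C (720:ℝ) + Polynomial.C 360 * Polynomial.X ^ 2).degree ≤ 2 := by
      compute_degree
    have hd3 : (2 : WithBot ℕ) < (P ^ 3).degree := by
      rw [Polynomial.degree_pow]
      obtain ⟨n, hn⟩ : ∃ n : ℕ, P.degree = n :=
        ⟨P.natDegree, Polynomial.degree_eq_natDegree hP0⟩
      rw [hn] at hdeg ⊢
      have h1n : 1 ≤ n := by exact_mod_cast hdeg
      have hsm : (3 : ℕ) • (n : WithBot ℕ) = ((3 * n : ℕ) : WithBot ℕ) := by
        rw [nsmul_eq_mul]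
        push_cast
        ring
      rw [hsm]
      exact_mod_cast by omega
    have hlt : (Polynomial.C (720:ℝ) + Polynomial.C 360 * Polynomial.X ^ 2).degree
        < (P ^ 3).degree := lt_of_le_of_lt hd2 hd3
    have hdQ : Q.degree = (P ^ 3).degree := Polynomial.degree_sub_eq_left_of_degree_lt hlt
    have hlcQ : Q.leadingCoeff = P.leadingCoeff ^ 3 := by
      rw [hQ, sub_eq_add_neg, add_comm, Polynomial.leadingCoeff_add_of_degree_lt
        (by rwa [Polynomial.degree_neg]), Polynomial.leadingCoeff_pow]
    have hQdeg : 0 < Q.degree := by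
      rw [hdQ]
      exact lt_trans (by norm_num) hd3
    have ht := Polynomial.tendsto_atTop_of_leadingCoeff_nonneg Q hQdeg
      (by rw [hlcQ]; positivity)
    have h1 : ∀ᶠ x : ℝ in Filter.atTop, 0 < Q.eval x :=
      ht.eventually (Filter.eventually_gt_atTop 0)
    obtain ⟨x, hx1, hx2⟩ := (h1.and (Filter.eventually_ge_atTop 1)).exists
    have hb := hbd x hx2
    simp [hQ] at hx1
    nlinarith

lemma eval_target (α β : ℝ) :
    eval₂Mat α β ((1 + U) * (1 + V)) = !![1 + α * β, α; β, 1] := by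
  ext i j
  fin_cases i <;> fin_cases j <;>
    simp [eval₂Mat, U, V, Matrix.mul_apply, Fin.sum_univ_two, Matrix.map_apply,
      Matrix.one_apply, Matrix.add_apply]

lemma eval_det' (α β : ℝ) (W : Matrix (Fin 2) (Fin 2) (MvPolynomial (Fin 2) ℝ)) :
    (eval₂Mat α β W).det = aeval ![α, β] W.det := by
  simp [eval₂Mat, Matrix.det_fin_two, Matrix.map_apply]

lemma eval_trace (α β : ℝ) (W : Matrix (Fin 2) (Fin 2) (MvPolynomial (Fin 2) ℝ)) :
    (eval₂Mat α β W).trace = aeval ![α, β] W.trace := by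
  simp [eval₂Mat, Matrix.trace_fin_two, Matrix.map_apply]

lemma eval_diag (x : ℝ) (p : MvPolynomial (Fin 2) ℝ) :
    aeval ![x, x] p
      = Polynomial.eval x (aeval (fun _ : Fin 2 => (Polynomial.X : Polynomial ℝ)) p) := by
  have h : (MvPolynomial.aeval ![x, x] : MvPolynomial (Fin 2) ℝ →ₐ[ℝ] ℝ)
      = (Polynomial.aeval x).comp
        (MvPolynomial.aeval (fun _ : Fin 2 => (Polynomial.X : Polynomial ℝ))) := by
    apply MvPolynomial.algHom_ext
    intro i
    fin_cases i <;> simp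
  rw [show aeval ![x, x] p
      = (MvPolynomial.aeval ![x, x] : MvPolynomial (Fin 2) ℝ →ₐ[ℝ] ℝ) p from rfl, h]
  rw [AlgHom.comp_apply, ← Polynomial.coe_aeval_eq_eval]

/-- There is no `W` in the unital `ℝ`-subalgebra of `M₂(ℝ[a,b])` generated by `U` and `V`
such that, for all real `α, β`, `exp(W(α,β)) = ((1 + U)(1 + V))(α,β)`: the solution `W` of
`exp(W) = exp(U)exp(V) = (1 + U)(1 + V)` exists only in the completion of the algebra
generated by `U` and `V`, not in the algebra itself. -/
theorem stmt_18 :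
    ¬ ∃ W ∈ Algebra.adjoin ℝ {U, V},
      ∀ α β : ℝ,
        NormedSpace.exp (eval₂Mat α β W) = eval₂Mat α β ((1 + U) * (1 + V)) := by
  rintro ⟨W, -, hW⟩
  -- Step 1: the trace of `W(α,β)` vanishes everywhere, since `det (exp W) = 1`.
  have htr : ∀ α β : ℝ, (eval₂Mat α β W).trace = 0 := by
    intro α β
    have h1 := congrArg Matrix.det (hW α β)
    rw [mydet_exp, eval_target] at h1
    have hdet1 : (!![1 + α * β, α; β, (1:ℝ)]).det = 1 := by
      simp [Matrix.det_fin_two_of]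
    rw [hdet1] at h1
    exact Real.exp_injective (h1.trans Real.exp_zero.symm)
  -- Step 2: the one-variable polynomial `P(x) = -det W(x,x)`.
  set P : Polynomial ℝ :=
    -(aeval (fun _ : Fin 2 => (Polynomial.X : Polynomial ℝ)) W.det) with hP
  have hPval : ∀ x : ℝ, P.eval x = -(eval₂Mat x x W).det := by
    intro x
    rw [hP, Polynomial.eval_neg, eval_det', eval_diag]
  -- Step 3: the key functional equation `F(P(x)) = 1 + x²/2`.
  have hkey : ∀ x : ℝ, myF (P.eval x) = 1 + x ^ 2 / 2 := by
    intro x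
    have h2 := congrArg Matrix.trace (hW x x)
    rw [mytrace_exp _ (htr x x), eval_target] at h2
    have h3 : (!![1 + x * x, x; x, (1:ℝ)]).trace = 2 + x * x := by
      simp [Matrix.trace_fin_two]
      ring
    rw [h3] at h2
    have h4 : -(eval₂Mat x x W).det = P.eval x := (hPval x).symm
    rw [h4] at h2
    nlinarith [h2]
  -- Step 4: positivity of `P` away from 0.
  have hpos : ∀ x : ℝ, x ≠ 0 → 0 < P.eval x := by
    intro x hx
    by_contra hle
    push_neg at hle
    have h5 := myF_le_one_of_nonpos hle
    have h6 := hkey x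
    have : (0:ℝ) < x ^ 2 := by positivity
    linarith
  -- Step 5: cube bound and degree.
  have hcube : ∀ x : ℝ, 1 ≤ x → (P.eval x) ^ 3 ≤ 720 + 360 * x ^ 2 := by
    intro x hx
    have h7 := myF_cube_le (le_of_lt (hpos x (by linarith)))
    rw [hkey x] at h7
    nlinarith [h7]
  have hdeg : P.degree ≤ 0 :=
    degree_le_zero_of_cube_bound P (fun x hx => hpos x (by linarith)) hcube
  have hC := Polynomial.eq_C_of_degree_le_zero hdeg
  have e1 := hkey 1
  have e2 := hkey 2
  rw [hC, Polynomial.eval_C] at e1 e2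
  norm_num at e1 e2
  rw [e1] at e2
  norm_num at e2
end
end
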